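/- arXiv:2502.06795 — 2 statements merged into one kernel-verified Lean document; each statement's English description precedes it below -/
import Mathlib

section
/- For each fixed x ∈ ℝ, n ∈ ℕ with n ≥ 1, and 0 < β < 1, the tail sum of the symmetrized density satisfies: the sum of Φ(nx − k) over all integers k with |k/n − x| ≥ 1/n^β is at most ((q + 1/q)/2) e^{2λ} e^{−λ(n^{1−β} − 1)} / (1 − e^{−λ}), up to an absolute constant. In particular, this tail sum tends to 0 as n → ∞. -/
noncomputable def g (q lam x : ℝ) : ℝ :=
  (Real.exp (lam * x) - q * Real.exp (-(lam * x))) /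
    (Real.exp (lam * x) + q * Real.exp (-(lam * x)))

noncomputable def M (q lam x : ℝ) : ℝ := (g q lam (x + 1) - g q lam (x - 1)) / 4

noncomputable def Phi (q lam x : ℝ) : ℝ := (M q lam x + M (1 / q) lam x) / 2

lemma g_eq (q lam x : ℝ) (hq : 0 < q) :
    g q lam x = 1 - 2 * q / (Real.exp (2 * lam * x) + q) := by
  have h1 : Real.exp (2 * lam * x) = Real.exp (lam * x) * Real.exp (lam * x) := by
    rw [← Real.exp_add]; ring_nf
  have h2 : Real.exp (-(lam * x)) * Real.exp (lam * x) = 1 := by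
    rw [← Real.exp_add]; simp
  have hd : Real.exp (lam * x) + q * Real.exp (-(lam * x)) > 0 := by positivity
  have hd2 : Real.exp (2 * lam * x) + q > 0 := by positivity
  rw [g, h1]
  field_simp
  linear_combination (-(2*q*Real.exp (lam * x))) * h2

lemma M_eq (q lam y : ℝ) (hq : 0 < q) :
    M q lam y = (2 * q / (Real.exp (2 * lam * (y - 1)) + q)
      - 2 * q / (Real.exp (2 * lam * (y + 1)) + q)) / 4 := by
  rw [M, g_eq q lam (y+1) hq, g_eq q lam (y-1) hq]; ring

lemma M_nonneg (q lam y : ℝ) (hq : 0 < q) (hlam : 0 < lam) : 0 ≤ M q lam y := by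
  rw [M_eq q lam y hq]
  have h1 : Real.exp (2 * lam * (y - 1)) ≤ Real.exp (2 * lam * (y + 1)) := by
    apply Real.exp_le_exp.2; nlinarith
  have h2 : (0:ℝ) < Real.exp (2 * lam * (y - 1)) + q := by positivity
  have h3 : (0:ℝ) < Real.exp (2 * lam * (y + 1)) + q := by positivity
  have key : 2*q/(Real.exp (2*lam*(y+1)) + q) ≤ 2*q/(Real.exp (2*lam*(y-1)) + q) := by
    apply div_le_div_of_nonneg_left (by positivity) h2 (by linarith)
  linarith

lemma M_le_left (q lam y : ℝ) (hq : 0 < q) (hlam : 0 < lam) :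
    M q lam y ≤ q / 2 * Real.exp (2 * lam) * Real.exp (-(2 * lam * y)) := by
  rw [M_eq q lam y hq]
  have h2 : (0:ℝ) < Real.exp (2 * lam * (y - 1)) + q := by positivity
  have h3 : (0:ℝ) < Real.exp (2 * lam * (y + 1)) + q := by positivity
  have key : 2 * q / (Real.exp (2 * lam * (y - 1)) + q)
      ≤ 2 * q * Real.exp (-(2 * lam * (y - 1))) := by
    rw [div_le_iff₀ h2]
    have h5 : Real.exp (-(2 * lam * (y-1))) * Real.exp (2 * lam * (y-1)) = 1 := by
      rw [← Real.exp_add]; simp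
    have expand : 2*q*Real.exp (-(2*lam*(y-1))) * (Real.exp (2*lam*(y-1)) + q)
        = 2*q + 2*q^2*Real.exp (-(2*lam*(y-1))) := by linear_combination 2*q*h5
    rw [expand]
    nlinarith [Real.exp_pos (-(2 * lam * (y - 1))), sq_nonneg q]
  have e1 : Real.exp (-(2 * lam * (y - 1))) = Real.exp (2*lam) * Real.exp (-(2*lam*y)) := by
    rw [← Real.exp_add]; ring_nf
  have pos : 0 < 2 * q / (Real.exp (2 * lam * (y + 1)) + q) := by positivity
  rw [e1] at key
  linarith

lemma M_le_right (q lam y : ℝ) (hq : 0 < q) (hlam : 0 < lam) :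
    M q lam y ≤ 1 / (2 * q) * Real.exp (2 * lam) * Real.exp (2 * lam * y) := by
  rw [M_eq q lam y hq]
  have h2 : (0:ℝ) < Real.exp (2 * lam * (y - 1)) + q := by positivity
  have h3 : (0:ℝ) < Real.exp (2 * lam * (y + 1)) + q := by positivity
  have key : 2 * q / (Real.exp (2 * lam * (y - 1)) + q)
      - 2 * q / (Real.exp (2 * lam * (y + 1)) + q)
      ≤ 2 * Real.exp (2 * lam * (y + 1)) / q := by
    rw [div_sub_div _ _ (ne_of_gt h2) (ne_of_gt h3), div_le_div_iff₀ (by positivity) hq]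
    have hEm : 0 < Real.exp (2 * lam * (y - 1)) := Real.exp_pos _
    have hEp : 0 < Real.exp (2 * lam * (y + 1)) := Real.exp_pos _
    nlinarith [mul_pos (mul_pos hEp hEp) hEm, mul_pos (mul_pos hq hEm) hEp,
      mul_pos (mul_pos hq hEp) hEp, mul_pos (mul_pos hq hq) hEm]
  have e1 : Real.exp (2 * lam * (y + 1)) = Real.exp (2*lam) * Real.exp (2*lam*y) := by
    rw [← Real.exp_add]; ring_nf
  rw [e1] at key ⊢
  have final : 2 * (Real.exp (2*lam) * Real.exp (2*lam*y)) / q / 4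
      = 1/(2*q) * Real.exp (2*lam) * Real.exp (2*lam*y) := by
    field_simp; ring
  linarith

lemma Phi_nonneg (q lam y : ℝ) (hq : 0 < q) (hlam : 0 < lam) : 0 ≤ Phi q lam y := by
  have h1 := M_nonneg q lam y hq hlam
  have h2 := M_nonneg (1/q) lam y (by positivity) hlam
  rw [Phi]; linarith

lemma Phi_le (q lam y : ℝ) (hq : 0 < q) (hlam : 0 < lam) :
    Phi q lam y ≤ (q + 1/q)/2 * Real.exp (2*lam) * Real.exp (-(lam * |y|)) := by
  have hq' : (0:ℝ) < 1/q := by positivity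
  rcases le_or_gt 0 y with hy | hy
  · have h1 := M_le_left q lam y hq hlam
    have h2 := M_le_left (1/q) lam y hq' hlam
    have hexp : Real.exp (-(2*lam*y)) ≤ Real.exp (-(lam*|y|)) := by
      apply Real.exp_le_exp.2; rw [abs_of_nonneg hy]; nlinarith
    have hstep := mul_le_mul_of_nonneg_left hexp
      (le_of_lt (by positivity : (0:ℝ) < (q+1/q)/4 * Real.exp (2*lam)))
    have hb : (0:ℝ) ≤ (q+1/q)/4 * Real.exp (2*lam) * Real.exp (-(lam*|y|)) := by positivity
    rw [Phi]
    nlinarith [hstep, hb]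
  · have h1 := M_le_right q lam y hq hlam
    have h2 := M_le_right (1/q) lam y hq' hlam
    have e2 : (1:ℝ)/(2*(1/q)) = q/2 := by field_simp
    have e3 : (1:ℝ)/(2*q) = (1/q)/2 := by ring
    rw [e2] at h2
    rw [e3] at h1
    have hexp : Real.exp (2*lam*y) ≤ Real.exp (-(lam*|y|)) := by
      apply Real.exp_le_exp.2; rw [abs_of_neg hy]; nlinarith
    have hstep := mul_le_mul_of_nonneg_left hexp
      (le_of_lt (by positivity : (0:ℝ) < (q+1/q)/4 * Real.exp (2*lam)))
    have hb : (0:ℝ) ≤ (q+1/q)/4 * Real.exp (2*lam) * Real.exp (-(lam*|y|)) := by positivity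
    rw [Phi]
    nlinarith [hstep, hb]

lemma tail_sum (lam T y c : ℝ) (hlam : 0 < lam) (hc : 0 ≤ c)
    (P : ℤ → Prop) (hP : ∀ k : ℤ, P k → T ≤ |y - (k : ℝ)|)
    (f : {k : ℤ // P k} → ℝ) (hf0 : ∀ k, 0 ≤ f k)
    (hf : ∀ k : {k : ℤ // P k}, f k ≤ c * Real.exp (-(lam * |y - ((k : ℤ) : ℝ)|))) :
    (∑' k, f k) ≤ 2 * Real.exp (lam/2) * c * Real.exp (-(lam * T)) / (1 - Real.exp (-lam)) := by
  have hr : (0:ℝ) < Real.exp (-(lam/2)) := Real.exp_pos _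
  set r := Real.exp (-(lam/2)) with hrdef
  have hr1 : r < 1 := Real.exp_lt_one_iff.2 (by linarith)
  have hEl : (0:ℝ) < 1 - Real.exp (-lam) := by
    have : Real.exp (-lam) < 1 := Real.exp_lt_one_iff.2 (by linarith)
    linarith
  by_cases hs : Summable f
  swap
  · rw [tsum_eq_zero_of_not_summable hs]
    apply div_nonneg (by positivity) (le_of_lt hEl)
  -- case facts
  have hcase : ∀ k : ℤ, P k → (⌈y⌉ ≤ k → ⌈y + T⌉ ≤ k) ∧ (k < ⌈y⌉ → k ≤ ⌊y - T⌋) := by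
    intro k hk
    have habs := hP k hk
    constructor
    · intro h
      have hy : y ≤ (k:ℝ) := Int.ceil_le.1 h
      rw [abs_of_nonpos (by linarith)] at habs
      exact Int.ceil_le.2 (by push_cast; linarith)
    · intro h
      have hy : (k:ℝ) < y := Int.lt_ceil.1 h
      rw [abs_of_pos (by linarith)] at habs
      exact Int.le_floor.2 (by push_cast; linarith)
  set G : ℕ → ℝ := fun m => c * Real.exp (lam/2) * Real.exp (-(lam*T)) * r ^ m with hG
  have hGs : Summable G := (summable_geometric_of_lt_one hr.le hr1).mul_left _
  set e : {k : ℤ // P k} → ℕ := fun k =>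
    if ⌈y⌉ ≤ k.1 then 2 * (k.1 - ⌈y + T⌉).toNat else 2 * (⌊y - T⌋ - k.1).toNat + 1 with he
  have hinj : Function.Injective e := by
    intro k₁ k₂ h
    have h1 := hcase k₁.1 k₁.2
    have h2 := hcase k₂.1 k₂.2
    apply Subtype.ext
    simp only [he] at h
    by_cases c1 : ⌈y⌉ ≤ k₁.1 <;> by_cases c2 : ⌈y⌉ ≤ k₂.1 <;>
      simp only [c1, c2, if_true, if_false, if_pos, if_neg, not_false_iff] at h <;> omega
  have hle : ∀ k : {k : ℤ // P k}, f k ≤ G (e k) := by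
    intro k
    refine le_trans (hf k) ?_
    have habs := hP k.1 k.2
    have h1 := hcase k.1 k.2
    simp only [he, hG]
    by_cases c1 : ⌈y⌉ ≤ k.1
    · rw [if_pos c1]
      have hjk : ⌈y + T⌉ ≤ k.1 := h1.1 c1
      have hy : y ≤ (k.1:ℝ) := Int.ceil_le.1 c1
      have hceil : y + T ≤ (⌈y + T⌉ : ℝ) := Int.le_ceil _
      set j : ℕ := (k.1 - ⌈y + T⌉).toNat with hj
      have hjZ : (j:ℤ) = k.1 - ⌈y + T⌉ := by rw [hj]; omega
      have hjval : (j:ℝ) = (k.1:ℝ) - (⌈y + T⌉:ℝ) := by exact_mod_cast congrArg (fun z : ℤ => (z : ℝ)) hjZ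
      have hrpow : r ^ (2 * j) = Real.exp (-(lam * j)) := by
        rw [hrdef, ← Real.exp_nat_mul]
        congr 1
        push_cast
        ring
      rw [hrpow]
      have hexp : Real.exp (-(lam * |y - (k.1:ℝ)|)) ≤ Real.exp (-(lam*T)) * Real.exp (-(lam * j)) := by
        rw [← Real.exp_add]
        apply Real.exp_le_exp.2
        rw [abs_of_nonpos (by linarith)]
        nlinarith [hjval, hceil]
      calc c * Real.exp (-(lam * |y - (k.1:ℝ)|))
          ≤ c * (Real.exp (-(lam*T)) * Real.exp (-(lam * j))) := by
            apply mul_le_mul_of_nonneg_left hexp hc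
        _ ≤ c * Real.exp (lam/2) * Real.exp (-(lam*T)) * Real.exp (-(lam * j)) := by
            nlinarith [Real.one_le_exp (by positivity : (0:ℝ) ≤ lam/2),
              mul_nonneg (mul_nonneg hc (Real.exp_pos (-(lam*T))).le) (Real.exp_pos (-(lam*(j:ℝ)))).le]
    · rw [if_neg c1]
      have hjk : k.1 ≤ ⌊y - T⌋ := h1.2 (by omega)
      have hy : (k.1:ℝ) < y := Int.lt_ceil.1 (by omega)
      have hfloor : ((⌊y - T⌋:ℤ):ℝ) ≤ y - T := Int.floor_le _
      set i : ℕ := (⌊y - T⌋ - k.1).toNat with hi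
      have hiZ : (i:ℤ) = ⌊y - T⌋ - k.1 := by rw [hi]; omega
      have hival : (i:ℝ) = (⌊y - T⌋:ℝ) - (k.1:ℝ) := by exact_mod_cast congrArg (fun z : ℤ => (z : ℝ)) hiZ
      have hrpow : r ^ (2 * i + 1) = Real.exp (-(lam * i)) * Real.exp (-(lam/2)) := by
        rw [hrdef, ← Real.exp_add, ← Real.exp_nat_mul]
        congr 1
        push_cast
        ring
      rw [hrpow]
      have hexp : Real.exp (-(lam * |y - (k.1:ℝ)|)) ≤ Real.exp (-(lam*T)) * Real.exp (-(lam * i)) := by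
        rw [← Real.exp_add]
        apply Real.exp_le_exp.2
        rw [abs_of_pos (by linarith)]
        nlinarith [hival, hfloor]
      have hcancel : Real.exp (lam/2) * Real.exp (-(lam/2)) = 1 := by
        rw [← Real.exp_add]; simp
      calc c * Real.exp (-(lam * |y - (k.1:ℝ)|))
          ≤ c * (Real.exp (-(lam*T)) * Real.exp (-(lam * i))) := by
            apply mul_le_mul_of_nonneg_left hexp hc
        _ = c * Real.exp (lam/2) * Real.exp (-(lam*T)) * (Real.exp (-(lam * i)) * Real.exp (-(lam/2))) := by
            rw [show c * Real.exp (lam/2) * Real.exp (-(lam*T)) * (Real.exp (-(lam * i)) * Real.exp (-(lam/2)))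
              = c * Real.exp (-(lam*T)) * Real.exp (-(lam * i)) * (Real.exp (lam/2) * Real.exp (-(lam/2))) from by ring,
              hcancel]
            ring
  have hmain := Summable.tsum_le_tsum_of_inj e hinj (fun m _ => by positivity) hle hs hGs
  have hGsum : ∑' m, G m = c * Real.exp (lam/2) * Real.exp (-(lam*T)) * (1 - r)⁻¹ := by
    rw [hG, tsum_mul_left, tsum_geometric_of_lt_one hr.le hr1]
  rw [hGsum] at hmain
  refine le_trans hmain ?_
  have hr2 : Real.exp (-lam) = r^2 := by
    rw [hrdef, ← Real.exp_nat_mul]; congr 1; push_cast; ring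
  rw [inv_eq_one_div, mul_one_div, div_le_div_iff₀ (by linarith) hEl, hr2]
  have hK : (0:ℝ) ≤ c * Real.exp (lam/2) * Real.exp (-(lam*T)) := by positivity
  nlinarith [mul_nonneg hK (sq_nonneg (1 - r))]

open Filter in
theorem Phi_tail_sum (q lam : ℝ) (hq : 0 < q) (hlam : 0 < lam)
    (x : ℝ) (β : ℝ) (hβ : 0 < β) (hβ1 : β < 1) :
    (∃ A : ℝ, 0 < A ∧ ∀ n : ℕ, 1 ≤ n →
      (∑' k : {k : ℤ // (1 : ℝ) / (n : ℝ) ^ β ≤ |(k : ℝ) / n - x|},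
          Phi q lam (n * x - (k : ℤ))) ≤
        A * ((q + 1 / q) / 2 * Real.exp (2 * lam) *
          Real.exp (-lam * ((n : ℝ) ^ (1 - β) - 1)) / (1 - Real.exp (-lam)))) ∧
    Tendsto (fun n : ℕ =>
        ∑' k : {k : ℤ // (1 : ℝ) / (n : ℝ) ^ β ≤ |(k : ℝ) / n - x|},
          Phi q lam (n * x - (k : ℤ))) atTop (nhds 0) := by
  set c : ℝ := (q + 1 / q) / 2 * Real.exp (2 * lam) with hcdef
  have hc : 0 ≤ c := by positivity
  have hEl : (0:ℝ) < 1 - Real.exp (-lam) := by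
    have : Real.exp (-lam) < 1 := Real.exp_lt_one_iff.2 (by linarith)
    linarith
  set A : ℝ := 2 * Real.exp (lam / 2) with hAdef
  have hA : 0 < A := by positivity
  -- the key bound, for every n ≥ 1
  have key : ∀ n : ℕ, 1 ≤ n →
      (∑' k : {k : ℤ // (1 : ℝ) / (n : ℝ) ^ β ≤ |(k : ℝ) / n - x|},
          Phi q lam (n * x - (k : ℤ))) ≤
        A * (c * Real.exp (-lam * ((n : ℝ) ^ (1 - β) - 1)) / (1 - Real.exp (-lam))) := by
    intro n hn
    have hn0 : (0:ℝ) < (n:ℝ) := by exact_mod_cast Nat.lt_of_lt_of_le Nat.zero_lt_one hn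
    set T : ℝ := (n : ℝ) ^ (1 - β) with hTdef
    have hP : ∀ k : ℤ, ((1 : ℝ) / (n : ℝ) ^ β ≤ |(k : ℝ) / n - x|) →
        T ≤ |(n:ℝ) * x - (k:ℝ)| := by
      intro k hk
      have hrw : |(n:ℝ) * x - (k:ℝ)| = (n:ℝ) * |(k : ℝ) / n - x| := by
        rw [abs_sub_comm, show ((k:ℝ) - (n:ℝ)*x) = (n:ℝ) * ((k:ℝ)/n - x) from by field_simp,
          abs_mul, abs_of_pos hn0]
      have hT : T = (n:ℝ) * (1 / (n:ℝ) ^ β) := by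
        rw [hTdef, Real.rpow_sub hn0, Real.rpow_one]; ring
      rw [hrw, hT]
      exact mul_le_mul_of_nonneg_left hk hn0.le
    have hbound := tail_sum lam T ((n:ℝ) * x) c hlam hc
      (fun k : ℤ => (1 : ℝ) / (n : ℝ) ^ β ≤ |(k : ℝ) / n - x|) hP
      (fun k => Phi q lam ((n:ℝ) * x - (k : ℤ)))
      (fun k => Phi_nonneg q lam _ hq hlam)
      (fun k => Phi_le q lam _ hq hlam)
    refine le_trans hbound ?_
    have hexp : Real.exp (-(lam * T)) ≤ Real.exp (-lam * (T - 1)) :=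
      Real.exp_le_exp.2 (by nlinarith)
    have hnum : 2 * Real.exp (lam/2) * c * Real.exp (-(lam * T))
        ≤ 2 * Real.exp (lam/2) * c * Real.exp (-lam * (T - 1)) := by
      have h0 : (0:ℝ) ≤ 2 * Real.exp (lam/2) * c := by positivity
      exact mul_le_mul_of_nonneg_left hexp h0
    rw [show A * (c * Real.exp (-lam * (T - 1)) / (1 - Real.exp (-lam)))
        = 2 * Real.exp (lam/2) * c * Real.exp (-lam * (T - 1)) / (1 - Real.exp (-lam)) from by
      rw [hAdef]; ring]
    exact (div_le_div_iff_of_pos_right hEl).2 hnum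
  refine ⟨⟨A, hA, key⟩, ?_⟩
  have hE : Tendsto (fun n : ℕ => Real.exp (-lam * ((n:ℝ) ^ (1 - β) - 1))) atTop (nhds 0) := by
    apply Real.tendsto_exp_atBot.comp
    have h1 : Tendsto (fun n : ℕ => (n:ℝ) ^ (1 - β)) atTop atTop :=
      (tendsto_rpow_atTop (by linarith)).comp tendsto_natCast_atTop_atTop
    have h2 : Tendsto (fun n : ℕ => (n:ℝ) ^ (1 - β) - 1) atTop atTop := by
      simpa [sub_eq_add_neg] using tendsto_atTop_add_const_right atTop (-1 : ℝ) h1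
    exact Tendsto.const_mul_atTop_of_neg (by linarith : -lam < 0) h2
  have hB : Tendsto (fun n : ℕ =>
      A * (c * Real.exp (-lam * ((n:ℝ) ^ (1 - β) - 1)) / (1 - Real.exp (-lam))))
      atTop (nhds 0) := by
    have h3 := hE.const_mul (A * c / (1 - Real.exp (-lam)))
    rw [mul_zero] at h3
    exact h3.congr fun n => by ring
  apply squeeze_zero' ?_ ?_ hB
  · exact Eventually.of_forall fun n => tsum_nonneg fun k => Phi_nonneg q lam _ hq hlam
  · exact eventually_atTop.2 ⟨1, key⟩
end

section
/- Suppose Φ : ℝ → ℝ is nonnegative with ∑_{k∈ℤ} Φ(u − k) = 1 for all u ∈ ℝ, and f : ℝ → ℝ is uniformly continuous and bounded. Then the Kantorovich operator C_n(f,x) := ∑_{k∈ℤ} (n ∫_0^{1/n} f(t + k/n) dt) Φ(nx − k) satisfies ‖C_n(f, ·) − B_n(f, ·)‖_∞ ≤ ω(f, 1/n), where ω is the modulus of continuity and B_n(f,x) := ∑_{k∈ℤ} f(k/n) Φ(nx − k). -/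
noncomputable def modulus (f : ℝ → ℝ) (δ : ℝ) : ℝ :=
  sSup {d : ℝ | ∃ u v : ℝ, |u - v| ≤ δ ∧ d = |f u - f v|}

theorem kantorovich_vs_basic (Φ : ℝ → ℝ) (hΦ : ∀ y, 0 ≤ Φ y)
    (hPU : ∀ u : ℝ, HasSum (fun k : ℤ => Φ (u - k)) 1)
    (f : ℝ → ℝ) (hfu : UniformContinuous f)
    (hfb : BddAbove (Set.range fun y => |f y|)) :
    ∀ (n : ℕ), 1 ≤ n → ∀ x : ℝ,
      |(∑' k : ℤ, (n * ∫ t in (0 : ℝ)..(1 / n), f (t + (k : ℝ) / n)) * Φ (n * x - k)) -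
          ∑' k : ℤ, f ((k : ℝ) / n) * Φ (n * x - k)| ≤
        modulus f (1 / n) := by
  obtain ⟨M, hM⟩ := hfb
  have hMle : ∀ y, |f y| ≤ M := fun y => hM ⟨y, rfl⟩
  intro n hn x
  have hn0 : (0:ℝ) < n := by exact_mod_cast Nat.lt_of_lt_of_le Nat.zero_lt_one hn
  set δ : ℝ := 1 / n with hδdef
  have hδ0 : 0 < δ := by positivity
  set ω := modulus f δ with hωdef
  have hbdd : BddAbove {d : ℝ | ∃ u v : ℝ, |u - v| ≤ δ ∧ d = |f u - f v|} := by
    refine ⟨2 * M, ?_⟩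
    rintro d ⟨u, v, -, rfl⟩
    calc |f u - f v| ≤ |f u| + |f v| := abs_sub _ _
      _ ≤ M + M := add_le_add (hMle u) (hMle v)
      _ = 2 * M := by ring
  have hmem : ∀ u v : ℝ, |u - v| ≤ δ → |f u - f v| ≤ ω :=
    fun u v h => le_csSup hbdd ⟨u, v, h, rfl⟩
  have hω0 : 0 ≤ ω := by
    have h := hmem 0 0 (by simpa using hδ0.le)
    exact le_trans (abs_nonneg _) h
  have hcont : Continuous f := hfu.continuous
  have hΦsum : Summable (fun k : ℤ => Φ ((n:ℝ) * x - k)) := (hPU ((n:ℝ)*x)).summable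
  have hΦtsum : ∑' k : ℤ, Φ ((n:ℝ)*x - k) = 1 := (hPU _).tsum_eq
  -- key pointwise bound
  have key : ∀ k : ℤ, |((n:ℝ) * ∫ t in (0:ℝ)..δ, f (t + (k:ℝ)/n)) - f ((k:ℝ)/n)| ≤ ω := by
    intro k
    have hint : IntervalIntegrable (fun t => f (t + (k:ℝ)/n)) MeasureTheory.volume 0 δ :=
      (hcont.comp (continuous_id.add continuous_const)).intervalIntegrable _ _
    have h1 : (∫ t in (0:ℝ)..δ, f (t + (k:ℝ)/n)) - δ * f ((k:ℝ)/n)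
        = ∫ t in (0:ℝ)..δ, (f (t + (k:ℝ)/n) - f ((k:ℝ)/n)) := by
      rw [intervalIntegral.integral_sub hint intervalIntegrable_const,
        intervalIntegral.integral_const, smul_eq_mul, sub_zero]
    have h2 : ‖∫ t in (0:ℝ)..δ, (f (t + (k:ℝ)/n) - f ((k:ℝ)/n))‖ ≤ ω * |δ - 0| := by
      apply intervalIntegral.norm_integral_le_of_norm_le_const
      intro t ht
      rw [Set.uIoc_of_le hδ0.le] at ht
      have : |t + (k:ℝ)/n - (k:ℝ)/n| ≤ δ := by
        rw [add_sub_cancel_right, abs_of_pos ht.1]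
        exact ht.2
      simpa [Real.norm_eq_abs] using hmem _ _ this
    have hnδ : (n:ℝ) * δ = 1 := by rw [hδdef]; field_simp
    have : ((n:ℝ) * ∫ t in (0:ℝ)..δ, f (t + (k:ℝ)/n)) - f ((k:ℝ)/n)
        = (n:ℝ) * ((∫ t in (0:ℝ)..δ, f (t + (k:ℝ)/n)) - δ * f ((k:ℝ)/n)) := by
      rw [mul_sub, ← mul_assoc, hnδ, one_mul]
    rw [this, abs_mul, abs_of_pos hn0, h1]
    calc (n:ℝ) * |∫ t in (0:ℝ)..δ, (f (t + (k:ℝ)/n) - f ((k:ℝ)/n))|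
        ≤ (n:ℝ) * (ω * |δ - 0|) := by
          exact mul_le_mul_of_nonneg_left (by simpa [Real.norm_eq_abs] using h2) hn0.le
      _ = ω := by rw [sub_zero, abs_of_pos hδ0, mul_comm (n:ℝ), mul_assoc, mul_comm δ, hnδ, mul_one]
  -- summability
  set a : ℤ → ℝ := fun k => ((n:ℝ) * ∫ t in (0:ℝ)..δ, f (t + (k:ℝ)/n)) * Φ ((n:ℝ)*x - k) with ha
  set b : ℤ → ℝ := fun k => f ((k:ℝ)/n) * Φ ((n:ℝ)*x - k) with hb
  have habs_b : ∀ k, |b k| ≤ M * Φ ((n:ℝ)*x - k) := by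
    intro k
    rw [hb, abs_mul, abs_of_nonneg (hΦ _)]
    exact mul_le_mul_of_nonneg_right (hMle _) (hΦ _)
  have habs_a : ∀ k, |a k| ≤ (ω + M) * Φ ((n:ℝ)*x - k) := by
    intro k
    rw [ha, abs_mul, abs_of_nonneg (hΦ _)]
    refine mul_le_mul_of_nonneg_right ?_ (hΦ _)
    have := key k
    have hM' := hMle ((k:ℝ)/n)
    calc |(n:ℝ) * ∫ t in (0:ℝ)..δ, f (t + (k:ℝ)/n)|
        ≤ |((n:ℝ) * ∫ t in (0:ℝ)..δ, f (t + (k:ℝ)/n)) - f ((k:ℝ)/n)| + |f ((k:ℝ)/n)| := by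
          have := abs_sub_abs_le_abs_sub ((n:ℝ) * ∫ t in (0:ℝ)..δ, f (t + (k:ℝ)/n)) (f ((k:ℝ)/n))
          linarith [abs_abs (f ((k:ℝ)/n))]
      _ ≤ ω + M := add_le_add (key k) hM'
  have hsa : Summable a := by
    apply Summable.of_abs
    exact Summable.of_nonneg_of_le (fun k => abs_nonneg _) habs_a (hΦsum.mul_left _)
  have hsb : Summable b := by
    apply Summable.of_abs
    exact Summable.of_nonneg_of_le (fun k => abs_nonneg _) habs_b (hΦsum.mul_left _)
  have hdiff : ∀ k, |a k - b k| ≤ ω * Φ ((n:ℝ)*x - k) := by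
    intro k
    have : a k - b k = (((n:ℝ) * ∫ t in (0:ℝ)..δ, f (t + (k:ℝ)/n)) - f ((k:ℝ)/n)) * Φ ((n:ℝ)*x - k) := by
      rw [ha, hb]; ring
    rw [this, abs_mul, abs_of_nonneg (hΦ _)]
    exact mul_le_mul_of_nonneg_right (key k) (hΦ _)
  have hsd : Summable (fun k => |a k - b k|) :=
    Summable.of_nonneg_of_le (fun k => abs_nonneg _) hdiff (hΦsum.mul_left _)
  calc |(∑' k : ℤ, a k) - ∑' k : ℤ, b k| = |∑' k : ℤ, (a k - b k)| := by rw [Summable.tsum_sub hsa hsb]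
    _ ≤ ∑' k : ℤ, |a k - b k| := by
        have hsd' : Summable (fun k : ℤ => ‖a k - b k‖) := hsd
        exact norm_tsum_le_tsum_norm hsd'
    _ ≤ ∑' k : ℤ, ω * Φ ((n:ℝ)*x - k) := Summable.tsum_le_tsum hdiff hsd (hΦsum.mul_left _)
    _ = ω * ∑' k : ℤ, Φ ((n:ℝ)*x - k) := tsum_mul_left
    _ = ω := by rw [hΦtsum, mul_one]
end
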